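/- Let A be a commutative ring with identity, and let N ⊆ A be an ideal such that every element of N is nilpotent and A is a ℚ-algebra. Suppose M ∈ SL_m(A) satisfies that all entries of I_m − M lie in N. Then M ∈ E_m(A), i.e., M is a product of elementary matrices. -/

import Mathlib

open scoped BigOperators

/-- An elementary matrix: differs from the identity in at most one
off-diagonal entry. -/
def IsElementary {A : Type*} [CommRing A] {n : ℕ}
    (E : Matrix (Fin n) (Fin n) A) : Prop :=
  ∃ i j : Fin n, ∃ a : A, i ≠ j ∧ E = 1 + Matrix.single i j a

/-- The set of products of elementary matrices; since the inverse of an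
elementary matrix is elementary, this is the group `E_n(A)`. -/
def ElemSubgroup (A : Type*) [CommRing A] (n : ℕ) :
    Submonoid (Matrix (Fin n) (Fin n) A) :=
  Submonoid.closure {E | IsElementary E}

open Matrix

section Aux

variable {A : Type*} [CommRing A] {m : ℕ}

/-- Two matrices with entries in an ideal of square zero multiply to zero. -/
lemma mulK_zero (K : Ideal A) (hK : ∀ x ∈ K, ∀ y ∈ K, x * y = 0)
    (X Z : Matrix (Fin m) (Fin m) A) (hX : ∀ i j, X i j ∈ K) (hZ : ∀ i j, Z i j ∈ K) :
    X * Z = 0 := by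
  ext i j
  simp only [Matrix.mul_apply, Matrix.zero_apply]
  exact Finset.sum_eq_zero fun k _ => hK _ (hX i k) _ (hZ k j)

lemma prod_one_add (K : Ideal A) (hK : ∀ x ∈ K, ∀ y ∈ K, x * y = 0)
    (l : List (Matrix (Fin m) (Fin m) A)) (hl : ∀ C ∈ l, ∀ i j, (C - 1) i j ∈ K) :
    l.prod = 1 + (l.map (fun C : Matrix (Fin m) (Fin m) A => C - 1)).sum ∧
      ∀ i j, ((l.map (fun C : Matrix (Fin m) (Fin m) A => C - 1)).sum) i j ∈ K := by
  induction l with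
  | nil => simp
  | cons C l ih =>
    obtain ⟨h1, h2⟩ := ih (fun C hC => hl C (List.mem_cons_of_mem _ hC))
    have hC : ∀ i j, (C - 1) i j ∈ K := hl C (List.mem_cons_self)
    constructor
    · rw [List.prod_cons, h1]
      have hz : (C - 1) * (l.map (fun C : Matrix (Fin m) (Fin m) A => C - 1)).sum = 0 :=
        mulK_zero K hK _ _ hC h2
      have : C = 1 + (C - 1) := by abel
      rw [this, add_mul, one_mul, mul_add, mul_one, hz]
      simp only [List.map_cons, List.sum_cons]
      abel
    · intro i j
      simp only [List.map_cons, List.sum_cons, Matrix.add_apply]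
      exact K.add_mem (hC i j) (h2 i j)

set_option maxHeartbeats 1000000 in
lemma whitehead (p q : Fin m) (hpq : p ≠ q) (a : A) (ha : a * a = 0) :
    transvection p q a * transvection q p 1 * transvection p q (-a) *
      transvection q p (-1) * transvection q p (-a)
    = 1 + single p p a + single q q (-a) := by
  have hqp : q ≠ p := hpq.symm
  have hneg : ∀ (i j : Fin m) (x : A), single i j (-x) = -single i j x := by
    intro i j x
    rw [← neg_one_smul A (single i j x), smul_single]
    simp
  simp only [transvection, mul_add, add_mul, mul_one, one_mul,
    single_mul_single_same, single_mul_single_of_ne, hpq, hqp, ne_eq,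
    not_false_eq_true, mul_zero, zero_mul, add_zero, zero_add, mul_neg, neg_mul, mul_one, one_mul,
    neg_neg, ha, hneg, neg_zero, single_zero]
  abel

/-- Entries of a `single` with coefficient in an ideal lie in the ideal. -/
lemma std_entry_mem (K : Ideal A) {c : A} (hc : c ∈ K) (p q i j : Fin m) :
    single p q c i j ∈ K := by
  by_cases h : p = i ∧ q = j
  · rw [h.1, h.2, single_apply_same]; exact hc
  · rw [single_apply_of_ne _ _ _ _ _ h]; exact K.zero_mem

lemma tprod_mem' (l : List (TransvectionStruct (Fin m) A)) :
    (l.map TransvectionStruct.toMatrix).prod ∈ ElemSubgroup A m := by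
  induction l with
  | nil => simpa using (ElemSubgroup A m).one_mem
  | cons s l ih =>
    rw [List.map_cons, List.prod_cons]
    refine (ElemSubgroup A m).mul_mem ?_ ih
    exact Submonoid.subset_closure ⟨s.i, s.j, s.c, s.hij, rfl⟩

lemma tprod_det (l : List (TransvectionStruct (Fin m) A)) :
    ((l.map TransvectionStruct.toMatrix).prod).det = 1 := by
  induction l with
  | nil => simp
  | cons s l ih => rw [List.map_cons, List.prod_cons, det_mul, ih, TransvectionStruct.det, one_mul]

end Aux

section Step

variable {A : Type*} [CommRing A] {m : ℕ}

lemma step (hm : 0 < m) (J : Ideal A) (t : ℕ) (ht : 1 ≤ t)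
    (M : Matrix (Fin m) (Fin m) A) (hdet : M.det = 1)
    (hM : ∀ i j, ((1 : Matrix (Fin m) (Fin m) A) - M) i j ∈ J ^ t) :
    ∃ l : List (TransvectionStruct (Fin m) A),
      ∀ i j, ((1 : Matrix (Fin m) (Fin m) A) -
        M * (l.map TransvectionStruct.toMatrix).prod) i j ∈ J ^ (t + 1) := by
  classical
  set Y : Matrix (Fin m) (Fin m) A := 1 - M with hYdef
  obtain ⟨z⟩ : Nonempty (Fin m) := ⟨⟨0, hm⟩⟩
  -- transvections clearing the off-diagonal entries
  set w1 : Fin m × Fin m → List (TransvectionStruct (Fin m) A) := fun p =>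
    if h : p.1 ≠ p.2 then [⟨p.1, p.2, h, Y p.1 p.2⟩] else [] with hw1def
  set l1 : List (TransvectionStruct (Fin m) A) :=
    ((Finset.univ : Finset (Fin m × Fin m)).toList.map w1).flatten with hl1def
  -- Whitehead-type lists fixing the diagonal
  set w2 : Fin m → List (TransvectionStruct (Fin m) A) := fun i =>
    if h : i ≠ z then
      [⟨z, i, Ne.symm h, -(Y i i)⟩, ⟨i, z, h, 1⟩, ⟨z, i, Ne.symm h, -(-(Y i i))⟩,
        ⟨i, z, h, -1⟩, ⟨i, z, h, -(-(Y i i))⟩]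
    else [] with hw2def
  set l2 : List (TransvectionStruct (Fin m) A) :=
    ((Finset.univ : Finset (Fin m)).toList.map w2).flatten with hl2def
  refine ⟨l1 ++ l2, ?_⟩
  set π : A →+* A ⧸ J ^ (t + 1) := Ideal.Quotient.mk (J ^ (t + 1)) with hπdef
  set Φ : Matrix (Fin m) (Fin m) A →+* Matrix (Fin m) (Fin m) (A ⧸ J ^ (t + 1)) :=
    π.mapMatrix with hΦdef
  set K : Ideal (A ⧸ J ^ (t + 1)) := (J ^ t).map π with hKdef
  have hK : ∀ x ∈ K, ∀ y ∈ K, x * y = 0 := by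
    intro x hx y hy
    obtain ⟨u, hu, rfl⟩ :=
      (Ideal.mem_map_iff_of_surjective π Ideal.Quotient.mk_surjective).mp hx
    obtain ⟨v, hv, rfl⟩ :=
      (Ideal.mem_map_iff_of_surjective π Ideal.Quotient.mk_surjective).mp hy
    rw [← _root_.map_mul]
    apply Ideal.Quotient.eq_zero_iff_mem.mpr
    have h1 : u * v ∈ J ^ t * J ^ t := Ideal.mul_mem_mul hu hv
    have h2 : J ^ t * J ^ t = J ^ (t + t) := (pow_add J t t).symm
    exact Ideal.pow_le_pow_right (by omega) (h2 ▸ h1)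
  have hYK : ∀ i j, π (Y i j) ∈ K := fun i j => Ideal.mem_map_of_mem π (hM i j)
  have hΦstd : ∀ (i j : Fin m) (c : A), Φ (single i j c) = single i j (π c) := by
    intro i j c
    ext a b
    simp [hΦdef, RingHom.mapMatrix_apply, Matrix.map_apply, single, apply_ite π]
  have hΦT : ∀ s : TransvectionStruct (Fin m) A,
      Φ s.toMatrix = transvection s.i s.j (π s.c) := by
    intro s
    rw [TransvectionStruct.toMatrix, transvection, transvection, _root_.map_add,
      _root_.map_one, hΦstd]
  -- the two sums
  set S1 : Matrix (Fin m) (Fin m) (A ⧸ J ^ (t + 1)) :=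
    ∑ p : Fin m × Fin m,
      if p.1 ≠ p.2 then single p.1 p.2 (π (Y p.1 p.2)) else 0 with hS1def
  set S2 : Matrix (Fin m) (Fin m) (A ⧸ J ^ (t + 1)) :=
    ∑ i : Fin m,
      if i ≠ z then
        single z z (-(π (Y i i))) + single i i (π (Y i i)) else 0 with hS2def
  have hS1K : ∀ i j, S1 i j ∈ K := by
    intro i j
    rw [hS1def, Matrix.sum_apply]
    refine Ideal.sum_mem _ fun p _ => ?_
    by_cases hp : p.1 ≠ p.2
    · rw [if_pos hp]
      exact std_entry_mem K (hYK p.1 p.2) _ _ _ _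
    · rw [if_neg hp, Matrix.zero_apply]
      exact K.zero_mem
  have hS2K : ∀ i j, S2 i j ∈ K := by
    intro i j
    rw [hS2def, Matrix.sum_apply]
    refine Ideal.sum_mem _ fun q _ => ?_
    by_cases hq : q ≠ z
    · rw [if_pos hq, Matrix.add_apply]
      exact K.add_mem (std_entry_mem K (K.neg_mem (hYK q q)) _ _ _ _)
        (std_entry_mem K (hYK q q) _ _ _ _)
    · rw [if_neg hq, Matrix.zero_apply]
      exact K.zero_mem
  -- image of the first product
  have hg1 : ∀ p : Fin m × Fin m, Φ (((w1 p).map TransvectionStruct.toMatrix).prod) =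
      if p.1 ≠ p.2 then 1 + single p.1 p.2 (π (Y p.1 p.2)) else 1 := by
    intro p
    by_cases h : p.1 ≠ p.2
    · rw [if_pos h, hw1def]
      simp only [dif_pos h, List.map_cons, List.map_nil, List.prod_cons, List.prod_nil,
        mul_one, hΦT]
      rfl
    · rw [if_neg h, hw1def]
      simp only [dif_neg h, List.map_nil, List.prod_nil, _root_.map_one]
  have hprod1 : Φ ((l1.map TransvectionStruct.toMatrix).prod) = 1 + S1 := by
    have e1 : Φ ((l1.map TransvectionStruct.toMatrix).prod) =
        ((Finset.univ : Finset (Fin m × Fin m)).toList.map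
          (fun p => Φ (((w1 p).map TransvectionStruct.toMatrix).prod))).prod := by
      rw [hl1def, List.map_flatten, List.prod_flatten, map_list_prod Φ, List.map_map,
        List.map_map, List.map_map]
      rfl
    rw [e1, List.map_congr_left (fun p _ => hg1 p)]
    have hyp : ∀ C ∈ (Finset.univ : Finset (Fin m × Fin m)).toList.map
        (fun p => if p.1 ≠ p.2 then 1 + single p.1 p.2 (π (Y p.1 p.2)) else 1),
        ∀ i j, (C - 1) i j ∈ K := by
      intro C hC i j
      obtain ⟨p, _, rfl⟩ := List.mem_map.mp hC
      by_cases hp : p.1 ≠ p.2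
      · rw [if_pos hp, add_sub_cancel_left]
        exact std_entry_mem K (hYK p.1 p.2) _ _ _ _
      · rw [if_neg hp, sub_self, Matrix.zero_apply]
        exact K.zero_mem
    obtain ⟨h1, _⟩ := prod_one_add K hK _ hyp
    rw [h1]
    congr 1
    rw [List.map_map]
    rw [List.map_congr_left (l := (Finset.univ : Finset (Fin m × Fin m)).toList)
      (g := fun p : Fin m × Fin m =>
        if p.1 ≠ p.2 then single p.1 p.2 (π (Y p.1 p.2)) else 0)
      (fun p _ => by
        by_cases hp : p.1 ≠ p.2
        · simp only [Function.comp_apply, if_pos hp, add_sub_cancel_left]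
        · simp only [Function.comp_apply, if_neg hp, sub_self])]
    rw [Finset.sum_map_toList]
  -- image of the second product
  have hg2 : ∀ i : Fin m, Φ (((w2 i).map TransvectionStruct.toMatrix).prod) =
      if i ≠ z then
        1 + single z z (-(π (Y i i))) + single i i (π (Y i i)) else 1 := by
    intro i
    by_cases h : i ≠ z
    · rw [if_pos h, hw2def]
      simp only [dif_pos h, List.map_cons, List.map_nil, List.prod_cons, List.prod_nil,
        mul_one, _root_.map_mul, hΦT, _root_.map_one, map_neg]
      rw [← mul_assoc, ← mul_assoc, ← mul_assoc]
      have hmem : -(π (Y i i)) ∈ K := K.neg_mem (hYK i i)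
      have ha : -(π (Y i i)) * -(π (Y i i)) = 0 := hK _ hmem _ hmem
      have hw := whitehead z i (Ne.symm h) (-(π (Y i i))) ha
      rw [hw, neg_neg]
    · rw [if_neg h, hw2def]
      simp only [dif_neg h, List.map_nil, List.prod_nil, _root_.map_one]
  have hprod2 : Φ ((l2.map TransvectionStruct.toMatrix).prod) = 1 + S2 := by
    have e1 : Φ ((l2.map TransvectionStruct.toMatrix).prod) =
        ((Finset.univ : Finset (Fin m)).toList.map
          (fun i => Φ (((w2 i).map TransvectionStruct.toMatrix).prod))).prod := by
      rw [hl2def, List.map_flatten, List.prod_flatten, map_list_prod Φ, List.map_map,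
        List.map_map, List.map_map]
      rfl
    rw [e1, List.map_congr_left (fun i _ => hg2 i)]
    have hyp : ∀ C ∈ (Finset.univ : Finset (Fin m)).toList.map
        (fun i => if i ≠ z then
          1 + single z z (-(π (Y i i))) + single i i (π (Y i i)) else 1),
        ∀ i j, (C - 1) i j ∈ K := by
      intro C hC i j
      obtain ⟨q, _, rfl⟩ := List.mem_map.mp hC
      by_cases hq : q ≠ z
      · rw [if_pos hq, show (1 + single z z (-(π (Y q q))) +
          single q q (π (Y q q))) - 1 =
          single z z (-(π (Y q q))) + single q q (π (Y q q)) from by abel,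
          Matrix.add_apply]
        exact K.add_mem (std_entry_mem K (K.neg_mem (hYK q q)) _ _ _ _)
          (std_entry_mem K (hYK q q) _ _ _ _)
      · rw [if_neg hq, sub_self, Matrix.zero_apply]
        exact K.zero_mem
    obtain ⟨h1, _⟩ := prod_one_add K hK _ hyp
    rw [h1]
    congr 1
    rw [List.map_map]
    rw [List.map_congr_left (l := (Finset.univ : Finset (Fin m)).toList)
      (g := fun q : Fin m =>
        if q ≠ z then
          single z z (-(π (Y q q))) + single q q (π (Y q q)) else 0)
      (fun q _ => by
        by_cases hq : q ≠ z
        · simp only [Function.comp_apply, if_pos hq]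
          abel
        · simp only [Function.comp_apply, if_neg hq, sub_self])]
    rw [Finset.sum_map_toList]
  -- the total product
  have hYΦK : ∀ i j, (Φ Y) i j ∈ K := by
    intro i j
    rw [hΦdef, RingHom.mapMatrix_apply, Matrix.map_apply]
    exact hYK i j
  have hfin : Φ (M * ((l1 ++ l2).map TransvectionStruct.toMatrix).prod) =
      1 + (S1 + S2 - Φ Y) := by
    rw [List.map_append, List.prod_append, _root_.map_mul, _root_.map_mul, hprod1, hprod2]
    have hMY : M = 1 - Y := by rw [hYdef]; abel
    have h12 : S1 * S2 = 0 := mulK_zero K hK _ _ hS1K hS2K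
    have hY1 : (Φ Y) * S1 = 0 := mulK_zero K hK _ _ hYΦK hS1K
    have hY2 : (Φ Y) * S2 = 0 := mulK_zero K hK _ _ hYΦK hS2K
    rw [hMY, _root_.map_sub, _root_.map_one]
    have e1 : (1 + S1) * (1 + S2) = 1 + (S1 + S2) := by
      rw [mul_add, mul_one, add_mul, one_mul, h12]
      abel
    rw [e1, sub_mul, one_mul, mul_add, mul_one, mul_add, hY1, hY2]
    abel
  -- identify the sum
  set s : A ⧸ J ^ (t + 1) := ∑ i : Fin m, π (Y i i) with hsdef
  have hΦYapp : ∀ i j, (Φ Y) i j = π (Y i j) := by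
    intro i j
    rw [hΦdef, RingHom.mapMatrix_apply, Matrix.map_apply]
  have hS1diag : ∀ i : Fin m, S1 i i = 0 := by
    intro i
    rw [hS1def, Matrix.sum_apply]
    refine Finset.sum_eq_zero fun p hp => ?_
    by_cases hpp : p.1 ≠ p.2
    · rw [if_pos hpp]
      exact single_apply_of_ne _ _ _ _ _ (fun hh => hpp (hh.1.trans hh.2.symm))
    · rw [if_neg hpp, Matrix.zero_apply]
  have hS1off : ∀ i j : Fin m, i ≠ j → S1 i j = π (Y i j) := by
    intro i j hij
    rw [hS1def, Matrix.sum_apply, Finset.sum_eq_single (i, j)]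
    · rw [if_pos hij, single_apply_same]
    · intro p _ hne
      by_cases hpp : p.1 ≠ p.2
      · rw [if_pos hpp]
        refine single_apply_of_ne _ _ _ _ _ (fun hh => hne ?_)
        exact Prod.ext hh.1 hh.2
      · rw [if_neg hpp, Matrix.zero_apply]
    · intro habs
      exact absurd (Finset.mem_univ _) habs
  have hS2zz : S2 z z = ∑ q ∈ Finset.univ.erase z, -(π (Y q q)) := by
    rw [hS2def, Matrix.sum_apply, ← Finset.filter_ne' Finset.univ z, Finset.sum_filter]
    refine Finset.sum_congr rfl fun q _ => ?_
    by_cases hq : q ≠ z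
    · rw [if_pos hq, if_pos hq, Matrix.add_apply, single_apply_same,
        single_apply_of_ne _ _ _ _ _ (fun hh => hq hh.1), add_zero]
    · rw [if_neg hq, if_neg hq, Matrix.zero_apply]
  have hS2d : ∀ i : Fin m, i ≠ z → S2 i i = π (Y i i) := by
    intro i hiz
    rw [hS2def, Matrix.sum_apply, Finset.sum_eq_single i]
    · rw [if_pos hiz, Matrix.add_apply, single_apply_same,
        single_apply_of_ne _ _ _ _ _ (fun hh => hiz hh.1.symm), zero_add]
    · intro q _ hqi
      by_cases hq : q ≠ z
      · rw [if_pos hq, Matrix.add_apply,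
          single_apply_of_ne _ _ _ _ _ (fun hh => hiz hh.1.symm),
          single_apply_of_ne _ _ _ _ _ (fun hh => hqi hh.1), add_zero]
      · rw [if_neg hq, Matrix.zero_apply]
    · intro habs
      exact absurd (Finset.mem_univ _) habs
  have hS2off : ∀ i j : Fin m, i ≠ j → S2 i j = 0 := by
    intro i j hij
    rw [hS2def, Matrix.sum_apply]
    refine Finset.sum_eq_zero fun q _ => ?_
    by_cases hq : q ≠ z
    · rw [if_pos hq, Matrix.add_apply,
        single_apply_of_ne _ _ _ _ _ (fun hh => hij (hh.1.symm.trans hh.2)),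
        single_apply_of_ne _ _ _ _ _ (fun hh => hij (hh.1.symm.trans hh.2)), add_zero]
    · rw [if_neg hq, Matrix.zero_apply]
  have hW : S1 + S2 - Φ Y = single z z (-s) := by
    ext i j
    by_cases hij : i = j
    · subst hij
      by_cases hiz : i = z
      · subst hiz
        rw [Matrix.sub_apply, Matrix.add_apply, hS1diag, hS2zz, hΦYapp,
          single_apply_same, zero_add, Finset.sum_neg_distrib, hsdef,
          ← Finset.sum_erase_add Finset.univ (fun q => π (Y q q)) (Finset.mem_univ i)]
        ring
      · rw [Matrix.sub_apply, Matrix.add_apply, hS1diag, hS2d i hiz, hΦYapp, zero_add,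
          single_apply_of_ne _ _ _ _ _ (fun hh => hiz hh.1.symm)]
        ring
    · rw [Matrix.sub_apply, Matrix.add_apply, hS1off i j hij, hS2off i j hij, hΦYapp,
        single_apply_of_ne _ _ _ _ _ (fun hh => hij (hh.1.symm.trans hh.2))]
      ring
  -- determinant argument: s = 0
  have hdiag : (1 : Matrix (Fin m) (Fin m) (A ⧸ J ^ (t + 1))) + single z z (-s) =
      Matrix.diagonal (fun i => if i = z then 1 + (-s) else 1) := by
    ext i j
    by_cases hij : i = j
    · subst hij
      by_cases hiz : i = z
      · subst hiz
        simp [Matrix.diagonal_apply_eq, Matrix.one_apply_eq]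
      · rw [Matrix.add_apply, Matrix.diagonal_apply_eq, Matrix.one_apply_eq, if_neg hiz,
          single_apply_of_ne _ _ _ _ _ (fun hh => hiz hh.1.symm), add_zero]
    · rw [Matrix.add_apply, Matrix.diagonal_apply_ne _ hij, Matrix.one_apply_ne hij,
        single_apply_of_ne _ _ _ _ _ (fun hh => hij (hh.1.symm.trans hh.2)), add_zero]
  have hdetMP : (M * ((l1 ++ l2).map TransvectionStruct.toMatrix).prod).det = 1 := by
    rw [det_mul, hdet, one_mul, tprod_det]
  have hs0 : s = 0 := by
    have h1 : (1 : A ⧸ J ^ (t + 1)) =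
        (Φ (M * ((l1 ++ l2).map TransvectionStruct.toMatrix).prod)).det := by
      rw [hΦdef, ← RingHom.map_det, hdetMP, _root_.map_one]
    rw [hfin, hW, hdiag, Matrix.det_diagonal,
      Finset.prod_ite_eq' Finset.univ z (fun _ => 1 + (-s))] at h1
    simp only [Finset.mem_univ, if_true] at h1
    have h2 : -s = 0 := by linear_combination -h1
    rwa [neg_eq_zero] at h2
  have hΦfinal : Φ (M * ((l1 ++ l2).map TransvectionStruct.toMatrix).prod) = 1 := by
    rw [hfin, hW, hs0, neg_zero, single_zero, add_zero]
  intro i j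
  have hentry : π ((M * ((l1 ++ l2).map TransvectionStruct.toMatrix).prod) i j) =
      π ((1 : Matrix (Fin m) (Fin m) A) i j) := by
    have h1 : (Φ (M * ((l1 ++ l2).map TransvectionStruct.toMatrix).prod)) i j =
        (1 : Matrix (Fin m) (Fin m) (A ⧸ J ^ (t + 1))) i j := by rw [hΦfinal]
    rw [hΦdef, RingHom.mapMatrix_apply, Matrix.map_apply] at h1
    rw [h1]
    by_cases hij : i = j
    · subst hij; simp [Matrix.one_apply_eq]
    · simp [Matrix.one_apply_ne hij]
  rw [Matrix.sub_apply]
  exact (Ideal.Quotient.eq).mp hentry.symm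

end Step

section Main

/-- If `M ∈ SL_m(A)` is congruent to the identity modulo an ideal `N` of
nilpotent elements of a commutative `ℚ`-algebra `A`, then `M ∈ E_m(A)`. -/
theorem stmt14 {A : Type*} [CommRing A] [Algebra ℚ A] (m : ℕ)
    (N : Ideal A) (hN : ∀ x ∈ N, IsNilpotent x)
    (M : Matrix (Fin m) (Fin m) A) (hdet : M.det = 1)
    (hM : ∀ i j, ((1 : Matrix (Fin m) (Fin m) A) - M) i j ∈ N) :
    M ∈ ElemSubgroup A m := by
  classical
  rcases Nat.eq_zero_or_pos m with hm | hm
  · subst hm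
    have : M = 1 := Subsingleton.elim _ _
    rw [this]; exact (ElemSubgroup A 0).one_mem
  -- the ideal generated by the entries of `1 - M`
  set J : Ideal A :=
    Ideal.span (Set.range fun p : Fin m × Fin m => ((1 : Matrix (Fin m) (Fin m) A) - M) p.1 p.2)
    with hJ
  have hMJ : ∀ i j, ((1 : Matrix (Fin m) (Fin m) A) - M) i j ∈ J := fun i j =>
    Ideal.subset_span ⟨(i, j), rfl⟩
  have hJrad : J ≤ Ideal.radical ⊥ := by
    rw [hJ, Ideal.span_le]
    rintro x ⟨p, rfl⟩
    obtain ⟨n, hn⟩ := hN _ (hM p.1 p.2)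
    exact ⟨n, by simpa using hn⟩
  obtain ⟨k, hk⟩ : ∃ k, J ^ k ≤ ⊥ :=
    Ideal.exists_pow_le_of_le_radical_of_fg hJrad (Submodule.fg_span (Set.finite_range _))
  -- downward induction
  have key : ∀ d t, 1 ≤ t → k ≤ t + d →
      ∀ M : Matrix (Fin m) (Fin m) A, M.det = 1 →
        (∀ i j, ((1 : Matrix (Fin m) (Fin m) A) - M) i j ∈ J ^ t) → M ∈ ElemSubgroup A m := by
    intro d
    induction d with
    | zero =>
      intro t ht hkt M hdet hMt
      have hJt : J ^ t ≤ ⊥ := le_trans (Ideal.pow_le_pow_right (by omega)) hk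
      have : M = 1 := by
        ext i j
        have := hJt (hMt i j)
        simp only [Ideal.mem_bot, Matrix.sub_apply] at this
        have := sub_eq_zero.mp this
        exact this.symm
      rw [this]; exact (ElemSubgroup A m).one_mem
    | succ d ih =>
      intro t ht hkt M hdet hMt
      obtain ⟨l, hl⟩ := step hm J t ht M hdet hMt
      set P := (l.map TransvectionStruct.toMatrix).prod with hP
      have hMP : M * P ∈ ElemSubgroup A m := by
        refine ih (t + 1) (by omega) (by omega) (M * P) ?_ hl
        rw [det_mul, hdet, one_mul, hP, tprod_det]
      have hQ : (l.reverse.map (TransvectionStruct.toMatrix ∘ TransvectionStruct.inv)).prod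
          ∈ ElemSubgroup A m := by
        have : (l.reverse.map (TransvectionStruct.toMatrix ∘ TransvectionStruct.inv)) =
            ((l.reverse.map TransvectionStruct.inv).map TransvectionStruct.toMatrix) := by
          rw [List.map_map]
        rw [this]
        exact tprod_mem' _
      have hPQ : P * (l.reverse.map (TransvectionStruct.toMatrix ∘ TransvectionStruct.inv)).prod
          = 1 := Matrix.TransvectionStruct.prod_mul_reverse_inv_prod l
      have : M = (M * P) *
          (l.reverse.map (TransvectionStruct.toMatrix ∘ TransvectionStruct.inv)).prod := by
        rw [Matrix.mul_assoc, hPQ, Matrix.mul_one]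
      rw [this]
      exact (ElemSubgroup A m).mul_mem hMP hQ
  exact key k 1 le_rfl (by omega) M hdet (by simpa using hMJ)

end Main
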